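/- With E[K_n] = (θ/σ)[∏_{i=0}^{n-1}(θ+σ+i)/(θ+i) − 1] for σ ∈ (0,1), θ > 0, the sequence E[K_n]/n^σ converges as n → ∞ to Γ(θ+1)/(σ Γ(θ+σ)); in particular E[K_n] grows like a constant times n^σ. -/

import Mathlib

open Filter Real

/-- The Pochhammer rising factorial `(a)_n`. -/
noncomputable def riseFac (a : ℝ) (n : ℕ) : ℝ := ∏ i ∈ Finset.range n, (a + i)

lemma riseFac_pos {a : ℝ} (ha : 0 < a) (n : ℕ) : 0 < riseFac a n :=
  Finset.prod_pos fun i _ => by positivity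

lemma riseFac_succ (a : ℝ) (n : ℕ) : riseFac a (n + 1) = riseFac a n * (a + n) :=
  Finset.prod_range_succ _ _

/-- With `E[K_n] = (θ/σ)((θ+σ)_n/(θ)_n − 1)` for `σ ∈ (0,1)`, `θ > 0`,
the sequence `E[K_n]/n^σ` converges to `Γ(θ+1)/(σ Γ(θ+σ))`. -/
theorem py_expected_distinct_asymptotics
    (σ θ : ℝ) (hσ : σ ∈ Set.Ioo (0:ℝ) 1) (hθ : 0 < θ) :
    Tendsto
      (fun n : ℕ => (θ / σ) * (riseFac (θ + σ) n / riseFac θ n - 1) / (n : ℝ) ^ σ)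
      atTop (nhds (Real.Gamma (θ + 1) / (σ * Real.Gamma (θ + σ)))) := by
  obtain ⟨hσ0, hσ1⟩ := hσ
  have hθσ : 0 < θ + σ := by linarith
  -- auxiliary sequence
  set g : ℕ → ℝ := fun n =>
    (θ / σ) * ((Real.GammaSeq θ n / Real.GammaSeq (θ + σ) n) * ((θ + n) / (θ + σ + n))
      - (n : ℝ) ^ (-σ)) with hg
  have hkey : ∀ n : ℕ, 1 ≤ n →
      (θ / σ) * (riseFac (θ + σ) n / riseFac θ n - 1) / (n : ℝ) ^ σ = g n := by
    intro n hn
    have hn0 : (0:ℝ) < n := by exact_mod_cast hn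
    have hP1 : 0 < riseFac θ n := riseFac_pos hθ n
    have hP2 : 0 < riseFac (θ + σ) n := riseFac_pos hθσ n
    have hfac : (0:ℝ) < (n.factorial : ℝ) := by exact_mod_cast n.factorial_pos
    have hd1 : (0:ℝ) < θ + n := by positivity
    have hd2 : (0:ℝ) < θ + σ + n := by positivity
    have hrpow : (0:ℝ) < (n : ℝ) ^ σ := Real.rpow_pos_of_pos hn0 σ
    have hG1 : Real.GammaSeq θ n = (n : ℝ) ^ θ * (n.factorial : ℝ) / (riseFac θ n * (θ + n)) := by
      rw [Real.GammaSeq, ← riseFac_succ]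
      rfl
    have hG2 : Real.GammaSeq (θ + σ) n
        = (n : ℝ) ^ (θ + σ) * (n.factorial : ℝ) / (riseFac (θ + σ) n * (θ + σ + n)) := by
      rw [Real.GammaSeq, ← riseFac_succ]
      rfl
    have hrw : (n : ℝ) ^ (θ + σ) = (n : ℝ) ^ θ * (n : ℝ) ^ σ := Real.rpow_add hn0 _ _
    have hneg : (n : ℝ) ^ (-σ) = ((n : ℝ) ^ σ)⁻¹ := by
      rw [Real.rpow_neg hn0.le]
    have hrθ : (0:ℝ) < (n : ℝ) ^ θ := Real.rpow_pos_of_pos hn0 θ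
    rw [hg]
    simp only [hG1, hG2, hrw, hneg]
    field_simp
  have hEv : (fun n : ℕ => (θ / σ) * (riseFac (θ + σ) n / riseFac θ n - 1) / (n : ℝ) ^ σ)
      =ᶠ[atTop] g := by
    filter_upwards [eventually_ge_atTop 1] with n hn using hkey n hn
  rw [tendsto_congr' hEv]
  -- compute the limit of g
  have hGamθσ : Real.Gamma (θ + σ) ≠ 0 := (Real.Gamma_pos_of_pos hθσ).ne'
  have h1 : Tendsto (fun n : ℕ => Real.GammaSeq θ n / Real.GammaSeq (θ + σ) n) atTop
      (nhds (Real.Gamma θ / Real.Gamma (θ + σ))) :=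
    (Real.GammaSeq_tendsto_Gamma θ).div (Real.GammaSeq_tendsto_Gamma (θ + σ)) hGamθσ
  have hden : Tendsto (fun n : ℕ => θ + σ + (n:ℝ)) atTop atTop :=
    tendsto_atTop_add_const_left _ _ tendsto_natCast_atTop_atTop
  have h2 : Tendsto (fun n : ℕ => (θ + (n:ℝ)) / (θ + σ + (n:ℝ))) atTop (nhds 1) := by
    have h3 : Tendsto (fun n : ℕ => 1 - σ / (θ + σ + (n:ℝ))) atTop (nhds (1 - 0)) :=
      tendsto_const_nhds.sub (tendsto_const_nhds.div_atTop hden)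
    rw [sub_zero] at h3
    refine h3.congr' ?_
    filter_upwards [hden.eventually_gt_atTop 0] with n hn
    field_simp
    ring
  have h4 : Tendsto (fun n : ℕ => ((n:ℝ)) ^ (-σ)) atTop (nhds 0) :=
    (tendsto_rpow_neg_atTop hσ0).comp tendsto_natCast_atTop_atTop
  have h5 : Tendsto g atTop
      (nhds ((θ / σ) * ((Real.Gamma θ / Real.Gamma (θ + σ)) * 1 - 0))) :=
    tendsto_const_nhds.mul (((h1.mul h2).sub h4))
  convert h5 using 2
  rw [mul_one, sub_zero, Real.Gamma_add_one hθ.ne']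
  field_simp
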